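/- For every word w ∈ X⁺, w = f̌(w) in T; that is, the pair (w, f̌(w)) belongs to the congruence ρ_R on X⁺. -/

import Mathlib

open List

variable {A : Type*} {G : Type*} {A_G : Type*}

/-- `L̈`: the words not in `L` whose maximal proper prefix and suffix are in `L`. -/
def Ddot (L : Set (List A)) : Set (List A) :=
  {v | v ∉ L ∧ v.dropLast ∈ L ∧ v.tail ∈ L}

/-- `IsSc L w s` : `s` is the sequence of coordinates of `w` determined by `L`,
via the recursive construction of the paper: if `w ∈ L` then `s = (w)`; otherwise
select an occurrence `w = w' v w''` of a factor `v ∈ L̈` and put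
`s = sc_L[w' v_α] (v) sc_L[v_ω w'']`. -/
inductive IsSc (L : Set (List A)) : List A → List (List A) → Prop
  | base (w : List A) (hw : w ∈ L) : IsSc L w [w]
  | step (w' w'' v : List A) (s₁ s₂ : List (List A)) (hv : v ∈ Ddot L)
      (h₁ : IsSc L (w' ++ v.dropLast) s₁) (h₂ : IsSc L (v.tail ++ w'') s₂) :
      IsSc L (w' ++ v ++ w'') (s₁ ++ v :: s₂)

open Classical in
/-- `sc_L[w]`, the sequence of coordinates of `w` determined by `L`. -/
noncomputable def scL (L : Set (List A)) (w : List A) : List (List A) :=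
  if h : ∃ s, IsSc L w s then h.choose else []
section CoreG
variable [Group G]

/-- Evaluation of a word over `A_G` in the group `G`. -/
def evalW (evA : A_G → G) (u : List A_G) : G := (u.map evA).prod

/-- `f̂ : A* → G`. -/
noncomputable def fhat (L : Set (List A)) (f : List A → G) (w : List A) : G :=
  ((scL L w).map f).prod

/-- first coordinate (word part of `f̀`). -/
noncomputable def graveWord (L : Set (List A)) (w : List A) : List A :=
  (scL L w).headI

/-- group part of `f̀`. -/
noncomputable def graveG (L : Set (List A)) (f : List A → G) (w : List A) : G :=
  ((scL L w).tail.map f).prod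

/-- last coordinate (word part of `f́`). -/
noncomputable def acuteWord (L : Set (List A)) (w : List A) : List A :=
  (scL L w).getLastD []

/-- group part of `f́`. -/
noncomputable def acuteG (L : Set (List A)) (f : List A → G) (w : List A) : G :=
  ((scL L w).dropLast.map f).prod

/-- The word over `X = A ⊕ A_G` determined by a coordinate sequence:
`w₀ f(ẅ₁)f(w₁)⋯f(ẅ_m) w_m`, the middle group element written as its
chosen representative word over `A_G`. -/
def checkOfSeq (f : List A → G) (rep : G → List A_G) :
    List (List A) → List (A ⊕ A_G)
  | [] => []
  | [w] => w.map Sum.inl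
  | w :: rest =>
      w.map Sum.inl ++ (rep ((rest.dropLast.map f).prod)).map Sum.inr ++
        (rest.getLastD []).map Sum.inl

/-- longest prefix of `A`-letters. -/
def takeA : List (A ⊕ A_G) → List A
  | Sum.inl a :: r => a :: takeA r
  | _ => []

def dropA : List (A ⊕ A_G) → List (A ⊕ A_G)
  | Sum.inl _ :: r => dropA r
  | w => w

/-- longest prefix of `A_G`-letters. -/
def takeG : List (A ⊕ A_G) → List A_G
  | Sum.inr b :: r => b :: takeG r
  | _ => []

def dropG : List (A ⊕ A_G) → List (A ⊕ A_G)
  | Sum.inr _ :: r => dropG r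
  | w => w

/-- Processing of the part `g₁u₁g₂u₂⋯g_nu_n` of a mixed word: returns the group
element `eval(g₁)·f̂(u₁)·…·eval(g_n)·(acute part of u_n)` together with the final
word coordinate of `u_n`.  (Fuel-based recursion.) -/
noncomputable def midRunAux (L : Set (List A)) (f : List A → G) (evA : A_G → G) :
    ℕ → List (A ⊕ A_G) → G × List A
  | 0, _ => (1, [])
  | n + 1, w =>
      match dropA (dropG w) with
      | [] => (evalW evA (takeG w) * acuteG L f (takeA (dropG w)),
               acuteWord L (takeA (dropG w)))
      | r' => (evalW evA (takeG w) * fhat L f (takeA (dropG w)) *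
                 (midRunAux L f evA n r').1,
               (midRunAux L f evA n r').2)

/-- The extension `f̌ : X⁺ → Z ⊆ X⁺` of `f̌` to mixed words
(`f̌(u₀g₁u₁⋯g_nu_n) = f̀(u₀) g₁ f̂(u₁) ⋯ g_n f́(u_n)`, the middle group
element written as its representative word). -/
noncomputable def fcheckX (L : Set (List A)) (f : List A → G) (evA : A_G → G)
    (rep : G → List A_G) (w : List (A ⊕ A_G)) : List (A ⊕ A_G) :=
  match dropA w with
  | [] => checkOfSeq f rep (scL L (takeA w))
  | r =>
      (graveWord L (takeA w)).map Sum.inl ++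
        (rep (graveG L f (takeA w) * (midRunAux L f evA r.length r).1)).map Sum.inr ++
        (midRunAux L f evA r.length r).2.map Sum.inl

end CoreG
/-- The smallest (semigroup) congruence on words containing the relation `R`. -/
inductive Cong {X : Type*} (R : List X → List X → Prop) : List X → List X → Prop
  | of {u v : List X} : R u v → Cong R u v
  | refl (u : List X) : Cong R u u
  | symm {u v : List X} : Cong R u v → Cong R v u
  | trans {u v w : List X} : Cong R u v → Cong R v w → Cong R u w
  | left (w : List X) {u v : List X} : Cong R u v → Cong R (w ++ u) (w ++ v)
  | right (w : List X) {u v : List X} : Cong R u v → Cong R (u ++ w) (v ++ w)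

section CoreRel
variable [Group G]

/-- The relation `R = R_G ∪ R_f` over `X = A ⊕ A_G`, where
`R_f = {eue = f(u) : u ∈ L} ∪ {v̈ = v̈_α f(v̈) v̈_ω : v̈ ∈ L̈}`,
`e = rep 1` the chosen word representing `1_G`, group elements
read as their representative words. -/
inductive RelR (L : Set (List A)) (RG : List A_G → List A_G → Prop)
    (f : List A → G) (rep : G → List A_G) :
    List (A ⊕ A_G) → List (A ⊕ A_G) → Prop
  | ofG {u v : List A_G} : RG u v → RelR L RG f rep (u.map Sum.inr) (v.map Sum.inr)
  | rU {u : List A} (hu : u ∈ L) :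
      RelR L RG f rep
        ((rep 1).map Sum.inr ++ u.map Sum.inl ++ (rep 1).map Sum.inr)
        ((rep (f u)).map Sum.inr)
  | rV {v : List A} (hv : v ∈ Ddot L) :
      RelR L RG f rep (v.map Sum.inl)
        (v.dropLast.map Sum.inl ++ (rep (f v)).map Sum.inr ++ v.tail.map Sum.inl)

end CoreRel

section AuxList
variable {A : Type*} {G : Type*} {A_G : Type*}

theorem takeA_dropA : ∀ w : List (A ⊕ A_G), (takeA w).map Sum.inl ++ dropA w = w
  | [] => rfl
  | Sum.inl a :: r => by simp [takeA, dropA, takeA_dropA r]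
  | Sum.inr _ :: _ => rfl

theorem takeG_dropG : ∀ w : List (A ⊕ A_G), (takeG w).map Sum.inr ++ dropG w = w
  | [] => rfl
  | Sum.inr b :: r => by simp [takeG, dropG, takeG_dropG r]
  | Sum.inl _ :: _ => rfl

theorem dropA_shape : ∀ w : List (A ⊕ A_G),
    dropA w = [] ∨ ∃ b r, dropA w = Sum.inr b :: r
  | [] => Or.inl rfl
  | Sum.inl _ :: r => dropA_shape r
  | Sum.inr b :: r => Or.inr ⟨b, r, rfl⟩

theorem dropG_shape : ∀ w : List (A ⊕ A_G),
    dropG w = [] ∨ ∃ a r, dropG w = Sum.inl a :: r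
  | [] => Or.inl rfl
  | Sum.inr _ :: r => dropG_shape r
  | Sum.inl a :: r => Or.inr ⟨a, r, rfl⟩

theorem takeG_cons (b : A_G) (r : List (A ⊕ A_G)) :
    takeG (Sum.inr b :: r : List (A ⊕ A_G)) = b :: takeG r := rfl

end AuxList
section AuxCong
variable {X : Type*} {R : List X → List X → Prop}

theorem Cong.append {u u' v v' : List X} (h1 : Cong R u u') (h2 : Cong R v v') :
    Cong R (u ++ v) (u' ++ v') :=
  Cong.trans (Cong.left u h2) (Cong.right v' h1)

end AuxCong

section AuxG
variable {A : Type*} {G : Type*} {A_G : Type*} [Group G]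
variable {L : Set (List A)} {RG : List A_G → List A_G → Prop}
variable {f : List A → G} {rep : G → List A_G} {evA : A_G → G}

theorem cong_map_inr {u v : List A_G} (h : Cong RG u v) :
    Cong (RelR L RG f rep) (u.map Sum.inr) (v.map Sum.inr) := by
  induction h with
  | of h => exact Cong.of (RelR.ofG h)
  | refl u => exact Cong.refl _
  | symm _ ih => exact Cong.symm ih
  | trans _ _ ih1 ih2 => exact Cong.trans ih1 ih2
  | left w _ ih => simpa using Cong.left (w.map Sum.inr) ih
  | right w _ ih => simpa using Cong.right (w.map Sum.inr) ih

theorem evalW_append (u v : List A_G) :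
    evalW evA (u ++ v) = evalW evA u * evalW evA v := by simp [evalW]

section
variable (hpres : ∀ u v : List A_G, u ≠ [] → v ≠ [] →
      (Cong RG u v ↔ evalW evA u = evalW evA v))
variable (hrepne : ∀ g : G, rep g ≠ []) (hrep : ∀ g : G, evalW evA (rep g) = g)

include hpres in
theorem congG {u v : List A_G} (hu : u ≠ []) (hv : v ≠ [])
    (h : evalW evA u = evalW evA v) :
    Cong (RelR L RG f rep) (u.map Sum.inr) (v.map Sum.inr) :=
  cong_map_inr ((hpres u v hu hv).2 h)

include hpres hrepne hrep in
theorem rep_mul (g h : G) :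
    Cong (RelR L RG f rep) ((rep g).map Sum.inr ++ (rep h).map Sum.inr)
      ((rep (g * h)).map Sum.inr) := by
  rw [← List.map_append]
  exact congG hpres (by simp [hrepne]) (hrepne _)
    (by rw [evalW_append, hrep, hrep, hrep])

end
end AuxG
section AuxSc
variable {A : Type*} {G : Type*} {A_G : Type*}
variable {L : Set (List A)}

theorem Ddot.ne_nil (hE : [] ∉ L) {v : List A} (hv : v ∈ Ddot L) : v ≠ [] := by
  rintro rfl; exact hE hv.2.1

theorem Ddot.one_lt_length (hE : [] ∉ L) (hA : ∀ a : A, [a] ∈ L)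
    {v : List A} (hv : v ∈ Ddot L) : 1 < v.length := by
  rcases v with _ | ⟨a, _ | ⟨b, t⟩⟩
  · exact absurd rfl (Ddot.ne_nil hE hv)
  · exact absurd (hA a) hv.1
  · simp

/-- every nonempty word not in `L` contains a `Ddot` factor. -/
theorem exists_ddot_factor (hE : [] ∉ L) (hA : ∀ a : A, [a] ∈ L) :
    ∀ u : List A, u ≠ [] → u ∉ L →
      ∃ w' v w'', v ∈ Ddot L ∧ u = w' ++ v ++ w''
  | [] => fun hne _ => absurd rfl hne
  | [a] => fun _ hu => absurd (hA a) hu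
  | (a :: b :: t) => fun _ hu => by
    set u := a :: b :: t with hu_def
    by_cases hd : u.dropLast ∈ L
    · by_cases ht : u.tail ∈ L
      · exact ⟨[], u, [], ⟨hu, hd, ht⟩, by simp⟩
      · obtain ⟨w', v, w'', hv, heq⟩ :=
          exists_ddot_factor hE hA (b :: t) (by simp) ht
        exact ⟨a :: w', v, w'', hv, by simp [hu_def, heq]⟩
    · obtain ⟨w', v, w'', hv, heq⟩ :=
        exists_ddot_factor hE hA u.dropLast (by simp [hu_def]) hd
      refine ⟨w', v, w'' ++ [u.getLast (by simp [hu_def])], hv, ?_⟩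
      conv_lhs => rw [← List.dropLast_append_getLast (l := u) (by simp [hu_def])]
      rw [heq]; simp
  termination_by u => u.length
  decreasing_by all_goals (simp [hu_def]; try omega)

theorem exists_isSc (hE : [] ∉ L) (hA : ∀ a : A, [a] ∈ L) :
    ∀ u : List A, u ≠ [] → ∃ s, IsSc L u s := by
  intro u
  obtain ⟨n, hn⟩ : ∃ n, u.length = n := ⟨_, rfl⟩
  induction n using Nat.strong_induction_on generalizing u with
  | _ n ih =>
    subst hn
    intro hne
    by_cases hu : u ∈ L
    · exact ⟨[u], IsSc.base u hu⟩
    obtain ⟨w', v, w'', hv, heq⟩ := exists_ddot_factor hE hA u hne hu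
    have hvlen : 1 < v.length := Ddot.one_lt_length hE hA hv
    have h1 : ∃ s, IsSc L (w' ++ v.dropLast) s := by
      refine ih _ ?_ _ rfl ?_
      · subst heq; simp; omega
      · rw [← List.length_pos_iff]; simp; omega
    have h2 : ∃ s, IsSc L (v.tail ++ w'') s := by
      refine ih _ ?_ _ rfl ?_
      · subst heq; simp; omega
      · rw [← List.length_pos_iff]; simp; omega
    obtain ⟨s₁, h1⟩ := h1; obtain ⟨s₂, h2⟩ := h2
    exact ⟨s₁ ++ v :: s₂, heq ▸ IsSc.step w' w'' v s₁ s₂ hv h1 h2⟩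

open Classical in
theorem scL_spec {u : List A} (h : ∃ s, IsSc L u s) : IsSc L u (scL L u) := by
  rw [scL, dif_pos h]; exact h.choose_spec

theorem IsSc.src_ne_nil (hE : [] ∉ L) {u : List A} {s : List (List A)}
    (h : IsSc L u s) : u ≠ [] := by
  induction h with
  | base w hw => rintro rfl; exact hE hw
  | step w' w'' v s₁ s₂ hv h₁ h₂ =>
    simp [Ddot.ne_nil hE hv]

theorem scL_nil (hE : [] ∉ L) : scL L ([] : List A) = [] := by
  rw [scL, dif_neg]
  rintro ⟨s, hs⟩
  exact hs.src_ne_nil hE rfl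

/-- alternating structure predicate for coordinate sequences. -/
inductive Alt (L : Set (List A)) : List (List A) → Prop
  | single (w) (hw : w ∈ L) : Alt L [w]
  | cons (w v t) (hw : w ∈ L) (hv : v ∈ Ddot L) (ht : Alt L t) : Alt L (w :: v :: t)

theorem Alt.ne_nil {s : List (List A)} (h : Alt L s) : s ≠ [] := by
  cases h <;> simp

theorem Alt.append {s₁ : List (List A)} (h₁ : Alt L s₁) :
    ∀ {v s₂}, v ∈ Ddot L → Alt L s₂ → Alt L (s₁ ++ v :: s₂) := by
  induction h₁ with
  | single w hw => exact fun hv h₂ => Alt.cons w _ _ hw hv h₂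
  | cons w v' t hw hv' ht ih => exact fun hv h₂ => Alt.cons w v' _ hw hv' (ih hv h₂)

theorem IsSc.alt {u : List A} {s : List (List A)} (h : IsSc L u s) : Alt L s := by
  induction h with
  | base w hw => exact Alt.single w hw
  | step w' w'' v s₁ s₂ hv h₁ h₂ ih₁ ih₂ => exact ih₁.append hv ih₂

end AuxSc
section Main
set_option linter.unusedSectionVars false
variable {A : Type*} {G : Type*} {A_G : Type*} [Group G]
variable {L : Set (List A)} {RG : List A_G → List A_G → Prop}
variable {f : List A → G} {rep : G → List A_G} {evA : A_G → G}

/-- the interleaved expansion of a coordinate sequence. -/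
def expandSeq (f : List A → G) (rep : G → List A_G) : List (List A) → List (A ⊕ A_G)
  | [] => []
  | [w] => w.map Sum.inl
  | w :: v :: t => w.map Sum.inl ++ (rep (f v)).map Sum.inr ++ expandSeq f rep t

theorem expandSeq_append {s₁ : List (List A)} (h : Alt L s₁) (v : List A)
    (s₂ : List (List A)) :
    expandSeq f rep (s₁ ++ v :: s₂) =
      expandSeq f rep s₁ ++ (rep (f v)).map Sum.inr ++ expandSeq f rep s₂ := by
  induction h with
  | single w hw => simp [expandSeq]
  | cons w v' t hw hv' ht ih =>
    simp [expandSeq, ih, List.append_assoc]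

theorem cong_expandSeq {u : List A} {s : List (List A)} (h : IsSc L u s) :
    Cong (RelR L RG f rep) (u.map Sum.inl) (expandSeq f rep s) := by
  induction h with
  | base w hw => exact Cong.refl _
  | step w' w'' v s₁ s₂ hv h₁ h₂ ih₁ ih₂ =>
    rw [expandSeq_append h₁.alt]
    have h3 : Cong (RelR L RG f rep)
        (v.map Sum.inl ++ w''.map Sum.inl)
        (v.dropLast.map Sum.inl ++ ((rep (f v)).map Sum.inr ++
          (v.tail.map Sum.inl ++ w''.map Sum.inl))) := by
      have := Cong.right (w''.map Sum.inl)
        (Cong.of (RelR.rV (L := L) (RG := RG) (f := f) (rep := rep) hv))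
      simpa [List.append_assoc] using this
    have ih₁' : Cong (RelR L RG f rep) (w'.map Sum.inl ++ v.dropLast.map Sum.inl)
        (expandSeq f rep s₁) := by simpa using ih₁
    have ih₂' : Cong (RelR L RG f rep) (v.tail.map Sum.inl ++ w''.map Sum.inl)
        (expandSeq f rep s₂) := by simpa using ih₂
    have h4 := Cong.append ih₁'
      (Cong.left ((rep (f v)).map Sum.inr) ih₂')
    have h5 := Cong.left (w'.map Sum.inl) h3
    simp only [List.map_append, List.append_assoc] at *
    exact Cong.trans h5 h4
theorem List.getLastD_cons_of_ne {α : Type*} {t : List α} (h : t ≠ []) (x d : α) :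
    (x :: t).getLastD d = t.getLastD d := by
  cases t with
  | nil => exact absurd rfl h
  | cons y l => simp [List.getLastD]

theorem List.dropLast_cons_of_ne {α : Type*} {t : List α} (h : t ≠ []) (x : α) :
    (x :: t).dropLast = x :: t.dropLast := by
  cases t with
  | nil => exact absurd rfl h
  | cons y l => simp

variable (hpres : ∀ u v : List A_G, u ≠ [] → v ≠ [] →
      (Cong RG u v ↔ evalW evA u = evalW evA v))
variable (hrepne : ∀ g : G, rep g ≠ []) (hrep : ∀ g : G, evalW evA (rep g) = g)

include hpres hrepne hrep in
theorem sandwich {w : List A} (hw : w ∈ L) (g h : G) :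
    Cong (RelR L RG f rep)
      ((rep g).map Sum.inr ++ w.map Sum.inl ++ (rep h).map Sum.inr)
      ((rep (g * f w * h)).map Sum.inr) := by
  have e1 : Cong (RelR L RG f rep) ((rep g).map Sum.inr)
      ((rep g).map Sum.inr ++ (rep 1).map Sum.inr) := by
    have := rep_mul (L := L) (f := f) hpres hrepne hrep g 1
    rw [mul_one] at this; exact this.symm
  have e2 : Cong (RelR L RG f rep) ((rep h).map Sum.inr)
      ((rep 1).map Sum.inr ++ (rep h).map Sum.inr) := by
    have := rep_mul (L := L) (f := f) hpres hrepne hrep 1 h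
    rw [one_mul] at this; exact this.symm
  have stepA := Cong.append (Cong.append e1 (Cong.refl (w.map Sum.inl))) e2
  have stepB := Cong.left ((rep g).map Sum.inr)
      (Cong.right ((rep h).map Sum.inr)
        (Cong.of (RelR.rU (L := L) (RG := RG) (f := f) (rep := rep) hw)))
  have stepC : Cong (RelR L RG f rep)
      ((rep g).map Sum.inr ++ ((rep (f w)).map Sum.inr ++ (rep h).map Sum.inr))
      ((rep (g * f w * h)).map Sum.inr) := by
    have h1 := rep_mul (L := L) (f := f) hpres hrepne hrep (f w) h
    have h2 := rep_mul (L := L) (f := f) hpres hrepne hrep g (f w * h)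
    rw [← mul_assoc] at h2
    exact (Cong.left _ h1).trans h2
  simp only [List.append_assoc] at *
  exact stepA.trans (stepB.trans stepC)

include hpres hrepne hrep in
theorem sandwichSeq {s : List (List A)} (hs : Alt L s) (g h : G) :
    Cong (RelR L RG f rep)
      ((rep g).map Sum.inr ++ expandSeq f rep s ++ (rep h).map Sum.inr)
      ((rep (g * (s.map f).prod * h)).map Sum.inr) := by
  induction hs generalizing g with
  | single w hw =>
    simpa [expandSeq, mul_one] using sandwich hpres hrepne hrep hw g h
  | cons w v t hw hv ht ih =>
    have h1 := Cong.right (expandSeq f rep t ++ (rep h).map Sum.inr)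
      (sandwich (f := f) hpres hrepne hrep hw g (f v))
    have h2 := ih (g * f w * f v)
    simp only [expandSeq, List.append_assoc, List.map_cons, List.prod_cons] at *
    simp only [mul_assoc] at *
    exact h1.trans h2

include hpres hrepne hrep in
theorem leftRun {s : List (List A)} (hs : Alt L s) (g : G) :
    Cong (RelR L RG f rep)
      ((rep g).map Sum.inr ++ expandSeq f rep s)
      ((rep (g * (s.dropLast.map f).prod)).map Sum.inr ++
        (s.getLastD []).map Sum.inl) := by
  induction hs generalizing g with
  | single w hw =>
    have h0 : Cong (RelR L RG f rep) ((rep g).map Sum.inr)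
        ((rep (g * 1)).map Sum.inr) :=
      congG hpres (hrepne _) (hrepne _) (by rw [hrep, hrep, mul_one])
    simpa [expandSeq] using Cong.right (w.map Sum.inl) h0
  | cons w v t hw hv ht ih =>
    have htne := ht.ne_nil
    have h1 := Cong.right (expandSeq f rep t)
      (sandwich (f := f) hpres hrepne hrep hw g (f v))
    have h2 := ih (g * f w * f v)
    rw [List.dropLast_cons_of_ne (by simp) w, List.dropLast_cons_of_ne htne v,
      List.getLastD_cons_of_ne (by simp) w, List.getLastD_cons_of_ne htne v]
    simp only [expandSeq, List.append_assoc, List.map_cons, List.prod_cons] at *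
    simp only [mul_assoc] at *
    exact h1.trans h2
include hpres hrepne hrep in
theorem insert_e {r : List (A ⊕ A_G)} (b : A_G) (r₀ : List (A ⊕ A_G))
    (hr : r = Sum.inr b :: r₀) :
    Cong (RelR L RG f rep) r ((rep 1).map Sum.inr ++ r) := by
  have hdec := takeG_dropG r
  have hne : takeG r ≠ [] := by rw [hr, takeG_cons]; simp
  have h := congG (L := L) (f := f) (rep := rep) hpres (u := takeG r) (v := rep 1 ++ takeG r)
    hne (by simp [hrepne]) (by rw [evalW_append, hrep, one_mul])
  have h2 := Cong.right (dropG r) h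
  simpa only [List.map_append, List.append_assoc, hdec] using h2

variable (hE : ([] : List A) ∉ L) (hA : ∀ a : A, [a] ∈ L)

include hpres hrepne hrep hE hA in
theorem midRun (n : ℕ) : ∀ (r : List (A ⊕ A_G)) (b : A_G) (r₀ : List (A ⊕ A_G)),
    r = Sum.inr b :: r₀ → r.length ≤ n → ∀ g : G,
    Cong (RelR L RG f rep)
      ((rep g).map Sum.inr ++ r)
      ((rep (g * (midRunAux L f evA n r).1)).map Sum.inr ++
        (midRunAux L f evA n r).2.map Sum.inl) := by
  induction n with
  | zero => intro r b r₀ hr hlen; rw [hr] at hlen; simp at hlen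
  | succ n ih =>
    intro r b r₀ hr hlen g
    have hdecG := takeG_dropG r
    have hdecA := takeA_dropA (dropG r)
    have hbne : takeG r ≠ [] := by rw [hr, takeG_cons]; simp
    -- merge the rep-word with the leading A_G block
    have hg' : Cong (RelR L RG f rep)
        ((rep g).map Sum.inr ++ (takeG r).map Sum.inr)
        ((rep (g * evalW evA (takeG r))).map Sum.inr) := by
      rw [← List.map_append]
      exact congG (L := L) (f := f) (rep := rep) hpres (by simp [hrepne]) (hrepne _)
        (by rw [evalW_append, hrep, hrep])
    have hstart : Cong (RelR L RG f rep)
        ((rep g).map Sum.inr ++ r)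
        ((rep (g * evalW evA (takeG r))).map Sum.inr ++
          ((takeA (dropG r)).map Sum.inl ++ dropA (dropG r))) := by
      have h0 := Cong.right (dropG r) hg'
      simp only [List.append_assoc, hdecG] at h0
      rw [← hdecA] at h0
      exact h0
    cases hshape : dropA (dropG r) with
    | nil =>
      rw [hshape] at hstart
      by_cases hu : takeA (dropG r) = []
      · -- pure group block
        rw [hu] at hstart
        simp only [midRunAux, hshape, hu]
        have : Cong (RelR L RG f rep)
            ((rep (g * evalW evA (takeG r))).map Sum.inr)
            ((rep (g * (evalW evA (takeG r) * acuteG L f ([] : List A)))).map Sum.inr) :=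
          congG (L := L) (f := f) (rep := rep) hpres (hrepne _) (hrepne _)
            (by rw [hrep, hrep, acuteG, scL_nil hE]; simp)
        simp only [List.map_nil, List.nil_append, List.append_nil] at hstart
        have hW : acuteWord L ([] : List A) = ([] : List A) := by
          rw [acuteWord, scL_nil hE]; rfl
        rw [hW]
        simpa using hstart.trans this
      · -- final A-block
        obtain ⟨s, hs⟩ := exists_isSc hE hA _ hu
        have hscl : IsSc L (takeA (dropG r)) (scL L (takeA (dropG r))) := scL_spec ⟨s, hs⟩
        have hexp := cong_expandSeq (RG := RG) (f := f) (rep := rep) hscl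
        have hlr := leftRun (f := f) hpres hrepne hrep hscl.alt (g * evalW evA (takeG r))
        simp only [midRunAux, hshape]
        simp only [List.map_nil, List.nil_append, List.append_nil] at hstart
        refine hstart.trans (Cong.trans (Cong.left _ hexp) ?_)
        rw [acuteG, acuteWord, ← mul_assoc]
        exact hlr
    | cons x rest =>
      rw [hshape] at hstart
      obtain ⟨b', r₁, hb'⟩ : ∃ b' r₁, dropA (dropG r) = Sum.inr b' :: r₁ := by
        rcases dropA_shape (dropG r) with h | ⟨b', r₁, h⟩
        · rw [h] at hshape; exact absurd hshape.symm (by simp)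
        · exact ⟨b', r₁, h⟩
      rw [hshape] at hb'
      have hlen' : (x :: rest : List (A ⊕ A_G)).length ≤ n := by
        have e1 : r.length = (takeG r).length + (dropG r).length := by
          conv_lhs => rw [← hdecG]
          simp
        have e2 : (dropG r).length = (takeA (dropG r)).length +
            (x :: rest : List (A ⊕ A_G)).length := by
          conv_lhs => rw [← hdecA]
          rw [hshape]; simp
        have h2 : 0 < (takeG r).length := List.length_pos_iff.mpr hbne
        omega
      by_cases hu : takeA (dropG r) = []
      · rw [hu] at hstart
        simp only [List.map_nil, List.nil_append] at hstart
        have := ih (x :: rest) b' r₁ hb' hlen' (g * evalW evA (takeG r))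
        simp only [midRunAux, hshape]
        rw [hu]
        have hfhat : fhat L f ([] : List A) = 1 := by rw [fhat, scL_nil hE]; simp
        rw [hfhat]
        simp only [mul_one, mul_assoc] at this ⊢
        exact hstart.trans this
      · obtain ⟨s, hs⟩ := exists_isSc hE hA _ hu
        have hscl : IsSc L (takeA (dropG r)) (scL L (takeA (dropG r))) := scL_spec ⟨s, hs⟩
        have hexp := cong_expandSeq (RG := RG) (f := f) (rep := rep) hscl
        have hins := insert_e (L := L) (f := f) hpres hrepne hrep b' r₁ hb'
        have hsand := sandwichSeq (f := f) hpres hrepne hrep hscl.alt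
          (g * evalW evA (takeG r)) 1
        have hrec := ih (x :: rest) b' r₁ hb' hlen'
          (g * evalW evA (takeG r) * fhat L f (takeA (dropG r)) * 1)
        simp only [midRunAux, hshape]
        -- assemble
        have step1 : Cong (RelR L RG f rep)
            ((rep g).map Sum.inr ++ r)
            ((rep (g * evalW evA (takeG r))).map Sum.inr ++
              (expandSeq f rep (scL L (takeA (dropG r))) ++
                ((rep 1).map Sum.inr ++ (x :: rest : List (A ⊕ A_G))))) := by
          refine hstart.trans ?_
          exact Cong.left _ (Cong.append hexp hins)
        have step2 : Cong (RelR L RG f rep)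
            ((rep (g * evalW evA (takeG r))).map Sum.inr ++
              (expandSeq f rep (scL L (takeA (dropG r))) ++
                ((rep 1).map Sum.inr ++ (x :: rest : List (A ⊕ A_G)))))
            ((rep (g * evalW evA (takeG r) * fhat L f (takeA (dropG r)) * 1)).map Sum.inr
              ++ (x :: rest : List (A ⊕ A_G))) := by
          have := Cong.right ((x : A ⊕ A_G) :: rest) hsand
          rw [fhat]
          simpa only [List.append_assoc] using this
        have := (step1.trans step2).trans hrec
        simp only [mul_one, mul_assoc] at this ⊢
        exact this
include hpres hrepne hrep in
theorem pureWord {u : List A} {s : List (List A)} (hs : IsSc L u s) :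
    Cong (RelR L RG f rep) (u.map Sum.inl) (checkOfSeq f rep s) := by
  have hexp := cong_expandSeq (RG := RG) (f := f) (rep := rep) hs
  cases hs.alt with
  | single w hw => simpa [checkOfSeq, expandSeq] using hexp
  | cons w v t hw hv ht =>
    have htne := ht.ne_nil
    have hlr := leftRun (f := f) hpres hrepne hrep ht (f v)
    refine hexp.trans ?_
    have hlift := Cong.left (w.map Sum.inl) hlr
    simp only [checkOfSeq, List.dropLast_cons_of_ne htne,
      List.getLastD_cons_of_ne htne, List.map_cons, List.prod_cons, expandSeq,
      List.append_assoc] at *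
    exact hlift
end Main
/-- Lemma 2. For every word `w ∈ X⁺`, `w = f̌(w)` in `T`;
that is, the pair `(w, f̌(w))` belongs to the congruence `ρ_R` on `X⁺`. -/
theorem word_eq_fcheck_in_T [Nonempty A] [Group G]
    (L : Set (List A)) (hE : [] ∉ L)
    (hFac : ∀ u w : List A, w ∈ L → u ≠ [] → u <:+: w → u ∈ L)
    (hA : ∀ a : A, [a] ∈ L)
    (RG : List A_G → List A_G → Prop) (evA : A_G → G)
    (hRGne : ∀ u v : List A_G, RG u v → u ≠ [] ∧ v ≠ [])
    (hpres : ∀ u v : List A_G, u ≠ [] → v ≠ [] →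
      (Cong RG u v ↔ evalW evA u = evalW evA v))
    (rep : G → List A_G) (hrepne : ∀ g : G, rep g ≠ [])
    (hrep : ∀ g : G, evalW evA (rep g) = g)
    (f : List A → G)
    (w : List (A ⊕ A_G)) (hw : w ≠ []) :
    Cong (RelR L RG f rep) w (fcheckX L f evA rep w) := by
  have hdecA := takeA_dropA w
  cases hr : dropA w with
  | nil =>
    have hw0 : w = (takeA w).map Sum.inl := by
      have h := hdecA; rw [hr, List.append_nil] at h; exact h.symm
    have hune : takeA w ≠ [] := by
      intro h; rw [h] at hw0; simp at hw0; exact hw hw0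
    obtain ⟨s, hs⟩ := exists_isSc hE hA _ hune
    have hscl := scL_spec (L := L) ⟨s, hs⟩
    simp only [fcheckX, hr]
    have hp := pureWord (f := f) hpres hrepne hrep hscl
    rw [← hw0] at hp
    exact hp
  | cons x rest =>
    obtain ⟨b, r₀, hb⟩ : ∃ b r₀, (x :: rest : List (A ⊕ A_G)) = Sum.inr b :: r₀ := by
      rcases dropA_shape w with h | ⟨b, r₀, h⟩
      · rw [h] at hr; exact absurd hr.symm (by simp)
      · exact ⟨b, r₀, hr ▸ h⟩
    simp only [fcheckX, hr]
    have hwdec := hdecA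
    rw [hr] at hwdec
    conv_lhs => rw [← hwdec]
    set M := (midRunAux L f evA (x :: rest : List (A ⊕ A_G)).length (x :: rest)).1
      with hM
    set W := (midRunAux L f evA (x :: rest : List (A ⊕ A_G)).length (x :: rest)).2
      with hW
    have hins := insert_e (L := L) (f := f) hpres hrepne hrep b r₀ hb
    have hmr := fun g => midRun (f := f) hpres hrepne hrep hE hA
      (x :: rest : List (A ⊕ A_G)).length (x :: rest) b r₀ hb le_rfl g
    by_cases hu : takeA w = []
    · rw [hu]
      simp only [List.map_nil, List.nil_append]
      have hgw : graveWord L ([] : List A) = [] := by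
        rw [graveWord, scL_nil hE]; rfl
      have hgg : graveG L f ([] : List A) = 1 := by
        rw [graveG, scL_nil hE]; simp
      rw [hgw, hgg]
      have := hins.trans (hmr 1)
      simpa [hM, hW] using this
    · obtain ⟨s, hs⟩ := exists_isSc hE hA _ hu
      have hscl := scL_spec (L := L) ⟨s, hs⟩
      have hexp := cong_expandSeq (RG := RG) (f := f) (rep := rep) hscl
      have halt := hscl.alt
      rw [graveWord, graveG]
      obtain ⟨s', hs'eq⟩ : ∃ s', scL L (takeA w) = s' := ⟨_, rfl⟩
      rw [hs'eq] at hexp halt ⊢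
      have hstep0 := Cong.right ((x : A ⊕ A_G) :: rest) hexp
      cases halt with
      | single w₀ hw₀ =>
        have hmid := hins.trans (hmr 1)
        have := hstep0.trans (Cong.left (w₀.map Sum.inl) hmid)
        simpa [expandSeq, hM, hW] using this
      | cons w₀ v t hw₀ hv ht =>
        have hsand := sandwichSeq (f := f) hpres hrepne hrep ht (f v) 1
        have hmid := hmr (f v * (t.map f).prod * 1)
        -- γ(rep (f v)) ++ E t ++ (x::rest) ≈ γ(rep (f v)) ++ E t ++ γ(rep 1) ++ (x::rest)
        have h1 : Cong (RelR L RG f rep)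
            ((rep (f v)).map Sum.inr ++ expandSeq f rep t ++
              ((x : A ⊕ A_G) :: rest))
            ((rep (f v)).map Sum.inr ++ expandSeq f rep t ++
              ((rep 1).map Sum.inr ++ ((x : A ⊕ A_G) :: rest))) :=
          Cong.left _ hins
        have h2 := Cong.right ((x : A ⊕ A_G) :: rest) hsand
        have h3 := (h1.trans (by simpa only [List.append_assoc] using h2)).trans hmid
        have h4 := Cong.left (w₀.map Sum.inl) h3
        refine hstep0.trans ?_
        simp only [expandSeq, List.map_cons, List.prod_cons, List.tail_cons,
          List.append_assoc, mul_one, mul_assoc] at *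
        exact h4
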